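/- For every natural number k ≥ 1, ∫_1^2 (ln x)^k/(x−1) dx = k! ζ(k+1) − (k/(k+1)) (ln 2)^{k+1} − k! ∑_{j=0}^{k−1} (ln 2)^j / j! · Li_{k+1−j}(1/2). -/

import Mathlib

open MeasureTheory Real
open intervalIntegral


lemma ne0 : ∀ x ∈ Set.uIcc (1:ℝ) 2, x ≠ 0 := by
  rw [Set.uIcc_of_le (by norm_num)]
  intro x hx h
  have := hx.1; subst h; linarith

lemma J0 (k : ℕ) : ∫ x in (1:ℝ)..2, (Real.log x)^k / x = (Real.log 2)^(k+1)/(k+1) := by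
  have h : ∀ x ∈ Set.uIcc (1:ℝ) 2, HasDerivAt (fun y => (Real.log y)^(k+1)/(k+1))
      ((Real.log x)^k / x) x := by
    intro x hx
    have hx0 : x ≠ 0 := ne0 x hx
    have := ((Real.hasDerivAt_log hx0).pow (k+1)).div_const (k+1)
    refine this.congr_deriv (Eq.symm ?_)
    rw [Nat.add_sub_cancel]
    push_cast
    field_simp
  have hi : IntervalIntegrable (fun x => (Real.log x)^k / x) volume 1 2 := by
    apply ContinuousOn.intervalIntegrable
    exact ContinuousOn.div ((Real.continuousOn_log.mono ne0).pow k) continuousOn_id ne0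
  rw [integral_eq_sub_of_hasDerivAt h hi]
  simp [Real.log_one]

lemma vderiv (m : ℕ) : ∀ x ∈ Set.uIcc (1:ℝ) 2,
    HasDerivAt (fun y => -((y^(m+1))⁻¹/((m:ℝ)+1))) ((x^(m+2))⁻¹) x := by
  intro x hx
  have hx0 : x ≠ 0 := ne0 x hx
  have := (((hasDerivAt_pow (m+1) x).inv (pow_ne_zero _ hx0)).div_const ((m:ℝ)+1)).neg
  push_cast [Nat.add_sub_cancel] at this
  have hM : ((m:ℝ)+1) ≠ 0 := by positivity
  refine this.congr_deriv (Eq.symm ?_)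
  rw [neg_div, neg_div, neg_neg, div_div, mul_comm ((x^(m+1))^2), mul_div_mul_left _ _ hM]
  have hp : (x^(m+1))^2 = x^(m+2) * x^m := by ring
  rw [eq_div_iff (by exact pow_ne_zero 2 (pow_ne_zero _ hx0)), hp, inv_mul_cancel_left₀ (pow_ne_zero _ hx0)]

lemma Jcont (k p : ℕ) : IntervalIntegrable (fun x => (Real.log x)^k * (x^p)⁻¹) volume 1 2 := by
  apply ContinuousOn.intervalIntegrable
  exact ContinuousOn.mul ((Real.continuousOn_log.mono ne0).pow k)
    ((continuousOn_id.pow p).inv₀ (fun x hx => pow_ne_zero _ (ne0 x hx)))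

lemma Jform (m : ℕ) : ∀ k : ℕ, ∫ x in (1:ℝ)..2, (Real.log x)^k * (x^(m+2))⁻¹
    = (k.factorial:ℝ)/((m:ℝ)+1)^(k+1)
      - (k.factorial:ℝ) * (1/2:ℝ)^(m+1) *
        ∑ j ∈ Finset.range (k+1), (Real.log 2)^j / (j.factorial:ℝ) / ((m:ℝ)+1)^(k+1-j) := by
  intro k
  induction k with
  | zero =>
    have := integral_eq_sub_of_hasDerivAt (vderiv m) (by simpa using Jcont 0 (m+2))
    simp only [pow_zero, one_mul] at this ⊢
    rw [this]
    have h2 : ((2:ℝ)^(m+1))⁻¹ = (1/2:ℝ)^(m+1) := by rw [one_div, inv_pow]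
    rw [h2]
    have hm : ((m:ℝ)+1) ≠ 0 := by positivity
    simp [Nat.factorial]
    ring
  | succ k ih =>
    have hu : ∀ x ∈ Set.uIcc (1:ℝ) 2,
        HasDerivAt (fun y => (Real.log y)^(k+1)) ((↑(k+1) * (Real.log x)^k) * x⁻¹) x := by
      intro x hx
      have := ((Real.hasDerivAt_log (ne0 x hx)).pow (k+1))
      refine this.congr_deriv ?_
      simp
    have hui : IntervalIntegrable (fun x => (↑(k+1) * (Real.log x)^k) * x⁻¹) volume 1 2 := by
      have := (Jcont k 1).const_mul ((k:ℝ)+1)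
      apply this.congr
      · intro x _; push_cast; ring
    have hibp := integral_mul_deriv_eq_deriv_mul hu (vderiv m) hui
      (by simpa using (Jcont 0 (m+2)))
    rw [hibp]
    have hrest : ∫ x in (1:ℝ)..2, (↑(k+1) * (Real.log x)^k) * x⁻¹ * (-((x^(m+1))⁻¹/((m:ℝ)+1)))
        = (-(↑(k+1))/((m:ℝ)+1)) * ∫ x in (1:ℝ)..2, (Real.log x)^k * (x^(m+2))⁻¹ := by
      rw [← intervalIntegral.integral_const_mul]
      apply intervalIntegral.integral_congr
      intro x hx
      have hx0 : x ≠ 0 := ne0 x hx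
      field_simp
      ring
    rw [hrest, ih]
    -- now pure algebra
    rw [Finset.sum_range_succ (n := k+1)]
    have hsplit : ∑ j ∈ Finset.range (k+1), (Real.log 2)^j / (j.factorial:ℝ) / ((m:ℝ)+1)^(k+1+1-j)
        = (∑ j ∈ Finset.range (k+1), (Real.log 2)^j / (j.factorial:ℝ) / ((m:ℝ)+1)^(k+1-j)) / ((m:ℝ)+1) := by
      rw [Finset.sum_div]
      apply Finset.sum_congr rfl
      intro j hj
      have hj' : j ≤ k := by simpa [Nat.lt_succ_iff] using hj
      have : k+1+1-j = (k+1-j)+1 := by omega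
      rw [this, pow_succ]
      simp only [div_div, mul_assoc]
    rw [hsplit]
    have hm : ((m:ℝ)+1) ≠ 0 := by positivity
    have hk1 : ((k+1:ℕ).factorial : ℝ) = ((k:ℝ)+1) * (k.factorial:ℝ) := by
      rw [Nat.factorial_succ]; push_cast; ring
    simp only [Real.log_one, Nat.add_sub_cancel]
    rw [hk1]
    have h2 : ((2:ℝ)^(m+1))⁻¹ = (1/2:ℝ)^(m+1) := by rw [one_div, inv_pow]
    rw [← h2]
    have hkf : (k.factorial:ℝ) ≠ 0 := by positivity
    rw [show k+1+1-(k+1) = 1 by omega]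
    generalize (∑ j ∈ Finset.range (k+1), Real.log 2 ^ j / (j.factorial:ℝ) / ((m:ℝ)+1)^(k+1-j)) = S
    field_simp
    push_cast
    ring


/-- The polylogarithm `Li_m(x) = ∑_{n ≥ 1} x^n / n^m`. -/
noncomputable def polylog (m : ℕ) (x : ℝ) : ℝ := ∑' n : ℕ, x ^ (n + 1) / ((n : ℝ) + 1) ^ m

lemma polylog_one_half : polylog 1 (1/2) = Real.log 2 := by
  unfold polylog
  have h := Real.hasSum_pow_div_log_of_abs_lt_one (x := (1/2:ℝ)) (by rw [abs_of_pos] <;> norm_num)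
  have h2 : (1:ℝ) - 1/2 = 1/2 := by norm_num
  rw [h2] at h
  have h3 : -Real.log (1/2) = Real.log 2 := by
    rw [one_div, Real.log_inv, neg_neg]
  rw [h3] at h
  simp only [pow_one]
  exact h.tsum_eq

lemma Spoly (m : ℕ) : Summable (fun n : ℕ => (1/2:ℝ)^(n+1)/((n:ℝ)+1)^m) := by
  refine Summable.of_nonneg_of_le (f := fun n : ℕ => (1/2:ℝ)^(n+1)) (fun n => by positivity) ?_ ?_
  · intro n
    apply div_le_self (by positivity)
    apply one_le_pow₀
    linarith [Nat.cast_nonneg (α := ℝ) n]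
  · exact (summable_nat_add_iff 1).2 (summable_geometric_of_lt_one (by norm_num) (by norm_num))

lemma Szeta (k : ℕ) (hk : 1 ≤ k) : Summable (fun n : ℕ => (1:ℝ)/((n:ℝ)+1)^(k+1)) := by
  have : Summable (fun n : ℕ => (1:ℝ)/(n:ℝ)^(k+1)) := Real.summable_one_div_nat_pow.2 (by omega)
  have := (summable_nat_add_iff 1).2 this
  apply this.congr
  intro n; push_cast; ring


theorem nielsen_ramanujan (k : ℕ) (hk : 1 ≤ k) :
    ∫ x in Set.Ioo (1 : ℝ) 2, (Real.log x) ^ k / (x - 1)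
      = (k.factorial : ℝ) * (∑' n : ℕ, (1 : ℝ) / (n + 1) ^ (k + 1))
        - ((k : ℝ) / (k + 1)) * (Real.log 2) ^ (k + 1)
        - (k.factorial : ℝ) *
            ∑ j ∈ Finset.range k,
              (Real.log 2) ^ j / (j.factorial : ℝ) * polylog (k + 1 - j) (1 / 2) := by
  set L := Real.log 2 with hL
  set g : ℕ → ℝ := fun n => ∫ x in Set.Ioo (1:ℝ) 2, (Real.log x)^k * (x^(n+1))⁻¹ with hg
  have hIoo : ∀ h : ℝ → ℝ, ∫ x in Set.Ioo (1:ℝ) 2, h x = ∫ x in (1:ℝ)..2, h x := by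
    intro h
    rw [intervalIntegral.integral_of_le (by norm_num), MeasureTheory.integral_Ioc_eq_integral_Ioo]
  have h0 : g 0 = L^(k+1)/((k:ℝ)+1) := by
    rw [hg]
    simp only [zero_add, pow_one]
    rw [hIoo]
    have := J0 k
    rw [← this]
    apply intervalIntegral.integral_congr
    intro x hx
    simp [div_eq_mul_inv]
  have hsucc : ∀ n : ℕ, g (n+1) = (k.factorial:ℝ)/((n:ℝ)+1)^(k+1)
      - (k.factorial:ℝ) * (1/2:ℝ)^(n+1) *
        ∑ j ∈ Finset.range (k+1), L^j / (j.factorial:ℝ) / ((n:ℝ)+1)^(k+1-j) := by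
    intro n
    rw [hg]
    simp only []
    rw [hIoo]
    exact Jform n k
  have hgnn : ∀ n, 0 ≤ g n := by
    intro n
    apply setIntegral_nonneg measurableSet_Ioo
    intro x hx
    have h1 : (1:ℝ) ≤ x := le_of_lt hx.1
    have : 0 ≤ Real.log x := Real.log_nonneg h1
    positivity
  have hLnn : 0 ≤ L := Real.log_nonneg (by norm_num)
  have hsum1 : Summable (fun n : ℕ => (1:ℝ)/((n:ℝ)+1)^(k+1)) := Szeta k hk
  have hgs : Summable (fun n => g (n+1)) := by
    refine Summable.of_nonneg_of_le (fun n => hgnn (n+1)) (fun n => ?_) (hsum1.mul_left (k.factorial:ℝ))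
    rw [hsucc n]
    have hb : 0 ≤ (k.factorial:ℝ) * (1/2:ℝ)^(n+1) *
        ∑ j ∈ Finset.range (k+1), L^j / (j.factorial:ℝ) / ((n:ℝ)+1)^(k+1-j) := by
      apply mul_nonneg (by positivity)
      apply Finset.sum_nonneg
      intro j hj
      positivity
    have : (k.factorial:ℝ)/((n:ℝ)+1)^(k+1) = (k.factorial:ℝ) * ((1:ℝ)/((n:ℝ)+1)^(k+1)) := by ring
    linarith [this ▸ le_refl ((k.factorial:ℝ)/((n:ℝ)+1)^(k+1))]
  have hgsum : Summable g := (summable_nat_add_iff 1).1 hgs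
  -- interchange
  have hker : ∑' n, g n = ∫ x in Set.Ioo (1:ℝ) 2, (Real.log x)^k / (x-1) := by
    have hint : ∀ n : ℕ, Integrable (fun x => (Real.log x)^k * (x^(n+1))⁻¹)
        (volume.restrict (Set.Ioo (1:ℝ) 2)) := by
      intro n
      exact (Jcont k (n+1)).1.mono_set Set.Ioo_subset_Ioc_self
    have hnorm : ∀ n : ℕ, (∫ x in Set.Ioo (1:ℝ) 2, ‖(Real.log x)^k * (x^(n+1))⁻¹‖) = g n := by
      intro n
      apply setIntegral_congr_fun measurableSet_Ioo
      intro x hx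
      have h1 : (1:ℝ) ≤ x := le_of_lt hx.1
      have hl : 0 ≤ Real.log x := Real.log_nonneg h1
      have : (0:ℝ) ≤ (Real.log x)^k * (x^(n+1))⁻¹ := by positivity
      show ‖(Real.log x)^k * (x^(n+1))⁻¹‖ = (Real.log x)^k * (x^(n+1))⁻¹
      rw [Real.norm_eq_abs, abs_of_nonneg this]
    have hS : Summable (fun n : ℕ => ∫ x in Set.Ioo (1:ℝ) 2, ‖(Real.log x)^k * (x^(n+1))⁻¹‖) := by
      apply hgsum.congr
      intro n
      exact (hnorm n).symm
    have := MeasureTheory.integral_tsum_of_summable_integral_norm hint hS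
    rw [show ∑' (i : ℕ), ∫ (a : ℝ) in Set.Ioo (1:ℝ) 2, (Real.log a)^k * (a^(i+1))⁻¹ = ∑' n, g n from rfl] at this
    rw [this]
    apply setIntegral_congr_fun measurableSet_Ioo
    intro x hx
    have hx1 : (1:ℝ) < x := hx.1
    have hx0 : x ≠ 0 := by linarith
    have hxi1 : x⁻¹ < 1 := by
      rw [inv_lt_one_iff₀]; right; linarith
    have hxi0 : 0 ≤ x⁻¹ := by positivity
    have hterm : ∀ n : ℕ, (Real.log x)^k * (x^(n+1))⁻¹ = ((Real.log x)^k * x⁻¹) * (x⁻¹)^n := by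
      intro n
      rw [← inv_pow, pow_succ]
      ring
    calc ∑' n : ℕ, (Real.log x)^k * (x^(n+1))⁻¹
        = ∑' n : ℕ, ((Real.log x)^k * x⁻¹) * (x⁻¹)^n := by exact tsum_congr hterm
      _ = ((Real.log x)^k * x⁻¹) * (1 - x⁻¹)⁻¹ := by
          rw [tsum_mul_left, tsum_geometric_of_lt_one hxi0 hxi1]
      _ = (Real.log x)^k / (x-1) := by
          have hx1' : x - 1 ≠ 0 := by linarith
          have h1x : 1 - x⁻¹ = (x-1)/x := by field_simp
          rw [h1x]
          field_simp
  rw [← hker]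
  -- now compute the tsum
  rw [hgsum.tsum_eq_zero_add, h0]
  have hzsum : ∑' n, g (n+1) = (k.factorial:ℝ) * (∑' n : ℕ, (1:ℝ)/((n:ℝ)+1)^(k+1))
      - (k.factorial:ℝ) * ∑ j ∈ Finset.range (k+1), L^j / (j.factorial:ℝ) * polylog (k+1-j) (1/2) := by
    have hA : Summable (fun n : ℕ => (k.factorial:ℝ)/((n:ℝ)+1)^(k+1)) := by
      apply (hsum1.mul_left (k.factorial:ℝ)).congr
      intro n; push_cast; ring
    have hBj : ∀ j ∈ Finset.range (k+1), Summable (fun n : ℕ =>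
        L^j / (j.factorial:ℝ) * ((1/2:ℝ)^(n+1)/((n:ℝ)+1)^(k+1-j))) := by
      intro j hj
      exact (Spoly (k+1-j)).mul_left _
    have hB : Summable (fun n : ℕ => (k.factorial:ℝ) * (1/2:ℝ)^(n+1) *
        ∑ j ∈ Finset.range (k+1), L^j / (j.factorial:ℝ) / ((n:ℝ)+1)^(k+1-j)) := by
      have := (summable_sum hBj).mul_left (k.factorial:ℝ)
      apply this.congr
      intro n
      rw [Finset.mul_sum, Finset.mul_sum]
      apply Finset.sum_congr rfl
      intro j hj
      field_simp
    calc ∑' n, g (n+1)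
        = ∑' n : ℕ, ((k.factorial:ℝ)/((n:ℝ)+1)^(k+1)
            - (k.factorial:ℝ) * (1/2:ℝ)^(n+1) *
              ∑ j ∈ Finset.range (k+1), L^j / (j.factorial:ℝ) / ((n:ℝ)+1)^(k+1-j)) := by
          exact tsum_congr hsucc
      _ = (∑' n : ℕ, (k.factorial:ℝ)/((n:ℝ)+1)^(k+1))
          - ∑' n : ℕ, (k.factorial:ℝ) * (1/2:ℝ)^(n+1) *
              ∑ j ∈ Finset.range (k+1), L^j / (j.factorial:ℝ) / ((n:ℝ)+1)^(k+1-j) := by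
          exact hA.tsum_sub hB
      _ = (k.factorial:ℝ) * (∑' n : ℕ, (1:ℝ)/((n:ℝ)+1)^(k+1))
          - (k.factorial:ℝ) * ∑ j ∈ Finset.range (k+1), L^j / (j.factorial:ℝ) * polylog (k+1-j) (1/2) := by
          congr 1
          · rw [← tsum_mul_left]
            apply tsum_congr
            intro n; push_cast; ring
          · have hrepr : (∑ j ∈ Finset.range (k+1), L^j / (j.factorial:ℝ) * polylog (k+1-j) (1/2))
                = ∑ j ∈ Finset.range (k+1), ∑' n : ℕ, L^j / (j.factorial:ℝ) * ((1/2:ℝ)^(n+1)/((n:ℝ)+1)^(k+1-j)) := by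
              apply Finset.sum_congr rfl
              intro j hj
              rw [tsum_mul_left]
              congr 1
            rw [hrepr, ← Summable.tsum_finsetSum hBj, ← tsum_mul_left]
            apply tsum_congr
            intro n
            rw [Finset.mul_sum, Finset.mul_sum]
            apply Finset.sum_congr rfl
            intro j hj
            field_simp
  rw [hzsum]
  -- final algebra
  rw [Finset.sum_range_succ]
  have hkk : k + 1 - k = 1 := by omega
  rw [hkk, polylog_one_half, ← hL]
  have hkf : (k.factorial:ℝ) ≠ 0 := by positivity
  have hk1 : ((k:ℝ)+1) ≠ 0 := by positivity
  have hcast : ∑' n : ℕ, (1:ℝ)/((n:ℝ)+1)^(k+1) = ∑' n : ℕ, (1:ℝ)/(((n:ℕ):ℝ)+1)^(k+1) := rfl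
  have hLk : (k.factorial:ℝ) * (L^k / (k.factorial:ℝ) * L) = L^(k+1) := by
    field_simp
    ring
  rw [mul_add, hLk]
  field_simp
  ring
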